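/- Let a, b, d be real numbers with a·d > 0 and b/d > 1. Then for every positive integer n there exists a unique μₙ ∈ (πn, πn + π/2) satisfying the characteristic equation ((a/d)μ² + b/d)·sin μ = μ·cos μ. -/

import Mathlib

open Real Set

set_option maxHeartbeats 800000 in
theorem stmt2 (a b d : ℝ) (had : 0 < a * d) (hbd : 1 < b / d) :
    ∀ n : ℕ, 0 < n →
      ∃! μ : ℝ, μ ∈ Set.Ioo (Real.pi * n) (Real.pi * n + Real.pi / 2) ∧
        ((a / d) * μ ^ 2 + b / d) * Real.sin μ = μ * Real.cos μ := by
  intro n hn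
  have hd : d ≠ 0 := by
    intro h
    rw [h, div_zero] at hbd; linarith
  set c : ℝ := a / d with hc_def
  set e : ℝ := b / d with he_def
  have hc : 0 < c := by
    have h1 : c = (a * d) / (d * d) := by
      rw [hc_def]; field_simp
    rw [h1]
    exact div_pos had (mul_self_pos.2 hd)
  have he : 1 < e := hbd
  set s : ℝ := (-1 : ℝ) ^ n with hs_def
  have hs2 : s * s = 1 := by
    rw [hs_def, ← pow_add]
    exact (neg_one_pow_eq_one_iff_even (by norm_num)).2 ⟨n, by ring⟩
  set L : ℝ := Real.pi * n with hL_def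
  set R : ℝ := Real.pi * n + Real.pi / 2 with hR_def
  have hcosn : Real.cos L = s := by
    have := Real.cos_nat_mul_pi_sub 0 n
    simpa [hL_def, mul_comm] using this
  have hsinn : Real.sin L = 0 := by
    rw [hL_def, mul_comm]; exact Real.sin_nat_mul_pi n
  have hpi := Real.pi_pos
  have hL_pos : 0 < L := by
    have : (1 : ℝ) ≤ (n : ℝ) := by exact_mod_cast hn
    rw [hL_def]; nlinarith
  have hLR : L < R := by rw [hR_def, hL_def]; linarith
  -- sign facts on the closed interval
  have hsin_sign : ∀ μ ∈ Icc L R, 0 ≤ s * Real.sin μ := by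
    intro μ hμ
    have h1 : Real.sin μ = s * Real.sin (μ - L) := by
      have h2 : μ = L + (μ - L) := by ring
      rw [h2, Real.sin_add, hsinn, hcosn]; ring_nf
    rw [h1, ← mul_assoc, hs2, one_mul]
    apply Real.sin_nonneg_of_nonneg_of_le_pi
    · linarith [hμ.1]
    · have h3 := hμ.2; rw [hR_def, hL_def] at *; linarith [hμ.1]
  have hcos_sign : ∀ μ ∈ Icc L R, 0 ≤ s * Real.cos μ := by
    intro μ hμ
    have h1 : Real.cos μ = s * Real.cos (μ - L) := by
      have h2 : μ = L + (μ - L) := by ring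
      rw [h2, Real.cos_add, hsinn, hcosn]; ring_nf
    rw [h1, ← mul_assoc, hs2, one_mul]
    apply Real.cos_nonneg_of_mem_Icc
    constructor
    · linarith [hμ.1]
    · have h3 := hμ.2; rw [hR_def, hL_def] at *; linarith
  -- the function
  set f : ℝ → ℝ := fun μ => s * ((c * μ ^ 2 + e) * Real.sin μ - μ * Real.cos μ) with hf_def
  have hderiv : ∀ μ : ℝ, HasDerivAt f
      (s * ((2 * c * μ) * Real.sin μ + (c * μ ^ 2 + e) * Real.cos μ
        - (Real.cos μ - μ * Real.sin μ))) μ := by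
    intro μ
    have h1 : HasDerivAt (fun μ : ℝ => c * μ ^ 2 + e) (2 * c * μ) μ := by
      have := ((hasDerivAt_pow 2 μ).const_mul c).add_const e
      simpa [mul_comm, mul_assoc, mul_left_comm] using this
    have h2 := h1.mul (Real.hasDerivAt_sin μ)
    have h3 := (hasDerivAt_id μ).mul (Real.hasDerivAt_cos μ)
    have h4 := (h2.sub h3).const_mul s
    simp only [id_eq] at h4
    exact h4.congr_deriv (by ring)
  have hcont : ContinuousOn f (Icc L R) := by
    apply Continuous.continuousOn
    rw [hf_def]
    fun_prop
  have hmono : StrictMonoOn f (Icc L R) := by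
    apply strictMonoOn_of_deriv_pos (convex_Icc L R) hcont
    intro μ hμ
    rw [interior_Icc] at hμ
    have hμ' : μ ∈ Icc L R := Ioo_subset_Icc_self hμ
    rw [(hderiv μ).deriv]
    have heq : s * ((2 * c * μ) * Real.sin μ + (c * μ ^ 2 + e) * Real.cos μ
        - (Real.cos μ - μ * Real.sin μ))
        = ((2 * c + 1) * μ) * (s * Real.sin μ) + (c * μ ^ 2 + e - 1) * (s * Real.cos μ) := by
      ring
    rw [heq]
    have hA := hsin_sign μ hμ'
    have hB := hcos_sign μ hμ'
    have hμpos : 0 < μ := lt_trans hL_pos hμ.1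
    have hP : 0 < (2 * c + 1) * μ := by nlinarith
    have hQ : 0 < c * μ ^ 2 + e - 1 := by nlinarith
    have hsum : (s * Real.sin μ) ^ 2 + (s * Real.cos μ) ^ 2 = 1 := by
      have := Real.sin_sq_add_cos_sq μ
      nlinarith [hs2]
    rcases hA.lt_or_eq with hA' | hA'
    · nlinarith
    · have hB' : 0 < s * Real.cos μ := by nlinarith
      nlinarith
  have hsinR : Real.sin R = s := by
    have h2 : R = L + Real.pi / 2 := by rw [hR_def, hL_def]
    rw [h2, Real.sin_add, hsinn, hcosn]; simp
  have hcosR : Real.cos R = 0 := by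
    have h2 : R = L + Real.pi / 2 := by rw [hR_def, hL_def]
    rw [h2, Real.cos_add, hsinn, hcosn]; simp
  have hfL : f L = -L := by
    show s * ((c * L ^ 2 + e) * Real.sin L - L * Real.cos L) = -L
    rw [hsinn, hcosn]
    linear_combination (-L) * hs2
  have hfR : f R = c * R ^ 2 + e := by
    show s * ((c * R ^ 2 + e) * Real.sin R - R * Real.cos R) = c * R ^ 2 + e
    rw [hsinR, hcosR]
    linear_combination (c * R ^ 2 + e) * hs2
  have hfL_neg : f L < 0 := by rw [hfL]; linarith
  have hfR_pos : 0 < f R := by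
    rw [hfR]
    have : 0 < R := lt_trans hL_pos hLR
    nlinarith
  -- existence
  obtain ⟨μ₀, hμ₀, hfμ₀⟩ :=
    intermediate_value_Ioo (le_of_lt hLR) hcont (Set.mem_Ioo.2 ⟨hfL_neg, hfR_pos⟩)
  have hs_ne : s ≠ 0 := by
    intro h; rw [h] at hs2; norm_num at hs2
  have hiff : ∀ μ : ℝ, ((c * μ ^ 2 + e) * Real.sin μ = μ * Real.cos μ) ↔ f μ = 0 := by
    intro μ
    show _ ↔ s * ((c * μ ^ 2 + e) * Real.sin μ - μ * Real.cos μ) = 0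
    constructor
    · intro h; rw [h]; ring
    · intro h
      have h2 : (c * μ ^ 2 + e) * Real.sin μ - μ * Real.cos μ = 0 := by
        rcases mul_eq_zero.1 h with h' | h'
        · exact absurd h' hs_ne
        · exact h'
      linarith
  refine ⟨μ₀, ⟨hμ₀, (hiff μ₀).2 hfμ₀⟩, ?_⟩
  rintro μ ⟨hμ, heq⟩
  have hfμ : f μ = 0 := (hiff μ).1 heq
  exact hmono.injOn (Ioo_subset_Icc_self hμ) (Ioo_subset_Icc_self hμ₀)
    (by rw [hfμ, hfμ₀])
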